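/- arXiv:1901.03795 — 2 statements merged into one kernel-verified Lean document; each statement's English description precedes it below -/
import Mathlib

section
/- Let S be a finite multiset of vectors in ℤ², each equal to (1,1), (−1,0), or (0,−1), with at least 2 elements, whose sum is (m,n). Let t be a rational number with 0 < t < 1 such that tm and tn are both integers. Then there exists a sub-multiset of S whose sum of vectors equals (tm, tn). -/
theorem stmt_2 (S : Multiset (ℤ × ℤ))
    (hS : ∀ v ∈ S, v = (1, 1) ∨ v = (-1, 0) ∨ v = (0, -1))
    (hcard : 2 ≤ Multiset.card S)
    (m n : ℤ) (hsum : S.sum = (m, n))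
    (t : ℚ) (ht0 : 0 < t) (ht1 : t < 1)
    (m' n' : ℤ) (hm' : (m' : ℚ) = t * (m : ℚ)) (hn' : (n' : ℚ) = t * (n : ℚ)) :
    ∃ T : Multiset (ℤ × ℤ), T ≤ S ∧ T.sum = (m', n') := by
  classical
  set a := S.count (1, 1) with ha
  set b := S.count (-1, 0) with hb
  set c := S.count (0, -1) with hc
  have hSeq : S = Multiset.replicate a (1, 1) + Multiset.replicate b (-1, 0)
      + Multiset.replicate c (0, -1) := by
    ext v
    by_cases h1 : v = ((1 : ℤ), (1 : ℤ))
    · subst h1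
      simp only [Multiset.count_add, Multiset.count_replicate, ha]
      norm_num [Prod.ext_iff]
    by_cases h2 : v = ((-1 : ℤ), (0 : ℤ))
    · subst h2
      simp only [Multiset.count_add, Multiset.count_replicate, hb]
      norm_num [Prod.ext_iff]
    by_cases h3 : v = ((0 : ℤ), (-1 : ℤ))
    · subst h3
      simp only [Multiset.count_add, Multiset.count_replicate, hc]
      norm_num [Prod.ext_iff]
    · have hv : v ∉ S := fun hv => by rcases hS v hv with h | h | h <;> simp_all
      simp only [Multiset.count_add, Multiset.count_replicate,
        Multiset.count_eq_zero_of_notMem hv]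
      rw [if_neg (fun h => h1 h.symm), if_neg (fun h => h2 h.symm),
        if_neg (fun h => h3 h.symm)]
  have hsum2 : S.sum = ((a : ℤ) - b, (a : ℤ) - c) := by
    rw [hSeq]
    simp [Multiset.sum_replicate, Prod.ext_iff]
    ring_nf
    constructor <;> trivial
  rw [hsum2] at hsum
  have hm : m = (a : ℤ) - b := (Prod.mk.injEq _ _ _ _ ▸ hsum).1.symm
  have hn : n = (a : ℤ) - c := (Prod.mk.injEq _ _ _ _ ▸ hsum).2.symm
  -- key inequalities over ℚ
  have haq : (0 : ℚ) ≤ (a : ℚ) := by positivity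
  have hbq : (0 : ℚ) ≤ (b : ℚ) := by positivity
  have hcq : (0 : ℚ) ≤ (c : ℚ) := by positivity
  have hmq : (m : ℚ) = (a : ℚ) - b := by exact_mod_cast congrArg (Int.cast : ℤ → ℚ) hm
  have hnq : (n : ℚ) = (a : ℚ) - c := by exact_mod_cast congrArg (Int.cast : ℤ → ℚ) hn
  have h1 : m' ≤ (a : ℤ) := by
    have : (m' : ℚ) ≤ (a : ℚ) := by rw [hm', hmq]; nlinarith
    exact_mod_cast this
  have h2 : n' ≤ (a : ℤ) := by
    have : (n' : ℚ) ≤ (a : ℚ) := by rw [hn', hnq]; nlinarith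
    exact_mod_cast this
  have h3 : 0 ≤ (b : ℤ) + m' := by
    have : (0 : ℚ) ≤ (b : ℚ) + m' := by rw [hm', hmq]; nlinarith
    exact_mod_cast this
  have h4 : n' ≤ (b : ℤ) + m' := by
    have : (n' : ℚ) ≤ (b : ℚ) + m' := by rw [hm', hn', hmq, hnq]; nlinarith
    exact_mod_cast this
  have h5 : 0 ≤ (c : ℤ) + n' := by
    have : (0 : ℚ) ≤ (c : ℚ) + n' := by rw [hn', hnq]; nlinarith
    exact_mod_cast this
  have h6 : m' ≤ (c : ℤ) + n' := by
    have : (m' : ℚ) ≤ (c : ℚ) + n' := by rw [hm', hn', hmq, hnq]; nlinarith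
    exact_mod_cast this
  set A : ℤ := max 0 (max m' n') with hA
  have hA0 : 0 ≤ A := le_max_left _ _
  have hAm : m' ≤ A := le_trans (le_max_left _ _) (le_max_right _ _)
  have hAn : n' ≤ A := le_trans (le_max_right _ _) (le_max_right _ _)
  have hAa : A ≤ (a : ℤ) := by
    simp only [hA, max_le_iff]
    exact ⟨Int.ofNat_nonneg a, h1, h2⟩
  have hAb : A - m' ≤ (b : ℤ) := by
    have : A ≤ (b : ℤ) + m' := by
      simp only [hA, max_le_iff]
      exact ⟨h3, le_add_of_nonneg_left (Int.le_of_add_le_add_right (by linarith)), h4⟩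
    linarith
  have hAc : A - n' ≤ (c : ℤ) := by
    have : A ≤ (c : ℤ) + n' := by
      simp only [hA, max_le_iff]
      exact ⟨h5, h6, by linarith⟩
    linarith
  refine ⟨Multiset.replicate A.toNat (1, 1) + Multiset.replicate (A - m').toNat (-1, 0)
      + Multiset.replicate (A - n').toNat (0, -1), ?_, ?_⟩
  · rw [hSeq]
    refine add_le_add (add_le_add ?_ ?_) ?_ <;>
      apply Multiset.replicate_le_replicate _ |>.mpr <;> omega
  · simp only [Multiset.sum_add, Multiset.sum_replicate, Prod.ext_iff, Prod.smul_mk,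
      smul_eq_mul, nsmul_eq_mul, Prod.fst_add, Prod.snd_add]
    constructor <;> push_cast <;> omega
end

section
/- Let k ≥ 4 points P₁, P₂, P₃, P₄ ∈ ℝ² with P₂ ≠ P₃, and place coordinates so that P₂ = (0,0), P₃ = (c, 0) with c > 0, and P₁ = (p, q) with q < 0. Then at least one of the following three pairs of rays has nonempty intersection: (i) the ray from P₁ through P₂ and the ray from P₄ through P₃; (ii) the ray from P₁ through P₂ and the ray from P₄ in direction P₂ − P₃; (iii) the ray from P₄ through P₃ and the ray from P₁ in direction P₃ − P₂. (Here 'ray from X through Y' means {X + t(Y − X) : t ≥ 0}, requiring X ≠ Y; if P₄ coincides with a relevant point, interpret the corresponding intersection as nonempty.) -/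
private lemma div_nonneg_of_nonpos_of_nonpos {a b : ℝ} (ha : a ≤ 0) (hb : b ≤ 0) :
    0 ≤ a / b := by
  rw [div_nonneg_iff]; right; exact ⟨ha, hb⟩

theorem stmt_17 (c p q : ℝ) (hc : 0 < c) (hq : q < 0) (P₄ : ℝ × ℝ) :
    (∃ t s : ℝ, 0 ≤ t ∧ 0 ≤ s ∧
      ((p, q) : ℝ × ℝ) + t • (((0, 0) : ℝ × ℝ) - (p, q))
        = P₄ + s • (((c, 0) : ℝ × ℝ) - P₄)) ∨
    (∃ t s : ℝ, 0 ≤ t ∧ 0 ≤ s ∧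
      ((p, q) : ℝ × ℝ) + t • (((0, 0) : ℝ × ℝ) - (p, q))
        = P₄ + s • (((0, 0) : ℝ × ℝ) - ((c, 0) : ℝ × ℝ))) ∨
    (∃ t s : ℝ, 0 ≤ t ∧ 0 ≤ s ∧
      P₄ + t • (((c, 0) : ℝ × ℝ) - P₄)
        = ((p, q) : ℝ × ℝ) + s • (((c, 0) : ℝ × ℝ) - ((0, 0) : ℝ × ℝ))) := by
  obtain ⟨a, b⟩ := P₄
  have hq0 : q ≠ 0 := ne_of_lt hq
  by_cases h1 : q ≤ b ∧ a * q ≤ p * b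
  · -- ray from P₁ meets ray from P₄ in direction -x
    right; left
    refine ⟨(q - b) / q, (a * q - p * b) / (c * q), ?_, ?_, ?_⟩
    · exact div_nonneg_of_nonpos_of_nonpos (by linarith [h1.1]) hq.le
    · exact div_nonneg_of_nonpos_of_nonpos (by linarith [h1.2]) (by nlinarith)
    · simp only [Prod.mk_sub_mk, Prod.smul_mk, smul_eq_mul, Prod.mk_add_mk, Prod.mk.injEq]
      constructor <;> field_simp <;> ring
  · by_cases h2 : 0 < b
    · -- b > 0 : ray from P₄ through P₃ meets horizontal ray from P₁
      have hab : p * b < a * q :=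
        lt_of_not_ge (fun h => h1 ⟨le_of_lt (hq.trans h2), h⟩)
      have hb0 : b ≠ 0 := ne_of_gt h2
      right; right
      refine ⟨(b - q) / b, (q * a + (b - q) * c - p * b) / (c * b), ?_, ?_, ?_⟩
      · exact div_nonneg (by linarith) h2.le
      · exact div_nonneg (by nlinarith) (by positivity)
      · simp only [Prod.mk_sub_mk, Prod.smul_mk, smul_eq_mul, Prod.mk_add_mk, Prod.mk.injEq]
        constructor <;> field_simp <;> ring
    · have hb0 : b ≤ 0 := le_of_not_gt h2
      by_cases h3 : b ≤ q ∧ q * a + (b - q) * c ≤ p * b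
      · -- b ≤ q : ray from P₄ through P₃ meets horizontal ray from P₁
        have hbneg : b < 0 := lt_of_le_of_lt h3.1 hq
        have hb0' : b ≠ 0 := ne_of_lt hbneg
        right; right
        refine ⟨(b - q) / b, (q * a + (b - q) * c - p * b) / (c * b), ?_, ?_, ?_⟩
        · exact div_nonneg_of_nonpos_of_nonpos (by linarith [h3.1]) hbneg.le
        · exact div_nonneg_of_nonpos_of_nonpos (by linarith [h3.2]) (by nlinarith)
        · simp only [Prod.mk_sub_mk, Prod.smul_mk, smul_eq_mul, Prod.mk_add_mk, Prod.mk.injEq]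
          constructor <;> field_simp <;> ring
      · -- ray from P₁ meets ray from P₄ through P₃
        have hE1 : b * p - a * q < 0 := by
          by_cases hbq : b ≤ q
          · have hx : p * b < q * a + (b - q) * c :=
              lt_of_not_ge (fun h => h3 ⟨hbq, h⟩)
            nlinarith
          · have hab : p * b < a * q :=
              lt_of_not_ge (fun h => h1 ⟨le_of_lt (lt_of_not_ge hbq), h⟩)
            linarith
        have hE2 : b * p - a * q + c * q < c * b := by
          by_cases hbq : b ≤ q
          · have hx : p * b < q * a + (b - q) * c :=
              lt_of_not_ge (fun h => h3 ⟨hbq, h⟩)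
            nlinarith
          · have hqb : q < b := lt_of_not_ge hbq
            nlinarith
        have hE0 : b * p - a * q + c * q < 0 := by nlinarith
        have hEne : b * p - a * q + c * q ≠ 0 := ne_of_lt hE0
        left
        refine ⟨((b * p - a * q + c * q) - c * b) / (b * p - a * q + c * q),
                (b * p - a * q) / (b * p - a * q + c * q), ?_, ?_, ?_⟩
        · exact div_nonneg_of_nonpos_of_nonpos (by linarith) hE0.le
        · exact div_nonneg_of_nonpos_of_nonpos hE1.le hE0.le
        · simp only [Prod.mk_sub_mk, Prod.smul_mk, smul_eq_mul, Prod.mk_add_mk, Prod.mk.injEq]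
          constructor <;> (rw [div_mul_eq_mul_div, div_mul_eq_mul_div, add_div' _ _ _ hEne, add_div' _ _ _ hEne, div_eq_div_iff hEne hEne]; ring)
end
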